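/- Let (s = u₀, ..., u_j, v_{i+1}) be a simple path and (s = v₀, ..., v_l, s) a simple cycle with 0 ≤ i < l, and suppose u_h = v_m for some 0 < h ≤ j and i+1 < m ≤ l, where h is minimal among all such coincidences. Then the shortcut walk (s = u₀, u₁, ..., u_h = v_m, v_{m+1}, ..., v_l, s) is a simple cycle of length h + (l - m) + 1. -/
import Mathlib


/-- With a simple path `(s = u₀, …, u_j, v_{i+1})`, a simple cycle
`(s = v₀, …, v_l, s)` with `0 ≤ i < l`, and a coincidence `u_h = v_m`
(`0 < h ≤ j`, `i + 1 < m ≤ l`) with `h` minimal, the shortcut walk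
`(s = u₀, …, u_h = v_m, v_{m+1}, …, v_l, s)` is a simple cycle of length
`h + (l - m) + 1`. -/
theorem stmt7 {α : Type*} (E : α → α → Prop) (s : α) (u v : ℕ → α)
    (j l i h m : ℕ)
    (hus : u 0 = s) (hvs : v 0 = s) (hclose : v (l + 1) = s)
    (hpathE : ∀ g < j, E (u g) (u (g + 1)))
    (hpathD : ∀ a b, a ≤ j → b ≤ j → u a = u b → a = b)
    (hnew : ∀ a ≤ j, u a ≠ v (i + 1))
    (hconn : E (u j) (v (i + 1)))
    (hcycE : ∀ g ≤ l, E (v g) (v (g + 1)))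
    (hcycD : ∀ a b, a ≤ l → b ≤ l → v a = v b → a = b)
    (hil : i < l)
    (hh : 0 < h) (hhj : h ≤ j) (him : i + 1 < m) (hml : m ≤ l)
    (huv : u h = v m)
    (hmin : ∀ h' m', 0 < h' → h' < h → i + 1 < m' → m' ≤ l → u h' ≠ v m') :
    let w : ℕ → α := fun t => if t ≤ h then u t else v (m + (t - h))
    w 0 = s ∧ w (h + (l - m) + 1) = s ∧
      (∀ t < h + (l - m) + 1, E (w t) (w (t + 1))) ∧
      (∀ a b, a < h + (l - m) + 1 → b < h + (l - m) + 1 → w a = w b → a = b) := by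
  intro w
  have key : ∀ a b, a < h + (l - m) + 1 → b < h + (l - m) + 1 →
      a ≤ h → ¬ b ≤ h → w a = w b → False := by
    intro a b ha hb h2a h2b hab
    simp only [w, if_pos h2a, if_neg h2b] at hab
    have hmb : m + (b - h) ≤ l := by omega
    rcases Nat.eq_zero_or_pos a with h0 | h0
    · subst h0
      rw [hus, ← hvs] at hab
      have := hcycD 0 (m + (b - h)) (by omega) hmb hab
      omega
    · rcases Nat.lt_or_ge a h with hlt | hge
      · exact hmin a (m + (b - h)) h0 hlt (by omega) hmb hab
      · have hae : a = h := by omega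
        rw [hae, huv] at hab
        have := hcycD m (m + (b - h)) (by omega) hmb hab
        omega
  refine ⟨?_, ?_, ?_, ?_⟩
  · simp only [w, if_pos (Nat.zero_le h)]; exact hus
  · have hn : ¬ (h + (l - m) + 1 ≤ h) := by omega
    simp only [w, if_neg hn]
    have e : m + (h + (l - m) + 1 - h) = l + 1 := by omega
    rw [e, hclose]
  · intro t ht
    by_cases h1 : t + 1 ≤ h
    · have h0 : t ≤ h := by omega
      simp only [w, if_pos h0, if_pos h1]
      exact hpathE t (by omega)
    · by_cases h2 : t ≤ h
      · have : t = h := by omega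
        subst this
        simp only [w, if_pos h2, if_neg h1]
        have e : m + (t + 1 - t) = m + 1 := by omega
        rw [e, huv]
        exact hcycE m hml
      · simp only [w, if_neg h2, if_neg h1]
        have e1 : m + (t + 1 - h) = (m + (t - h)) + 1 := by omega
        rw [e1]
        exact hcycE _ (by omega)
  · intro a b ha hb hab
    by_cases h2a : a ≤ h <;> by_cases h2b : b ≤ h
    · simp only [w, if_pos h2a, if_pos h2b] at hab
      exact hpathD a b (by omega) (by omega) hab
    · exact absurd hab (fun hab => (key a b ha hb h2a h2b hab).elim)
    · exact absurd hab.symm (fun hab => (key b a hb ha h2b h2a hab).elim)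
    · simp only [w, if_neg h2a, if_neg h2b] at hab
      have := hcycD (m + (a - h)) (m + (b - h)) (by omega) (by omega) hab
      omega
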